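/- Let A and B be rigid blocks of a sparse graph G such that A ∩ B has at least one vertex and both A and B contain at least 3 vertices of type 1. Then A ∩ B contains at least 3 vertices of type 1, and both A ∪ B and A ∩ B are rigid blocks. -/

import Mathlib

open SimpleGraph

variable {V : Type*}

/-- Number of type-1 vertices in a vertex set. -/
noncomputable def n1 (t1 : V → Prop) (S : Set V) : ℕ := {v ∈ S | t1 v}.ncard

/-- Number of type-2 vertices in a vertex set. -/
noncomputable def n2 (t1 : V → Prop) (S : Set V) : ℕ := {v ∈ S | ¬ t1 v}.ncard

/-- Number of edges of `G` with both endpoints in `S`. -/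
noncomputable def edgesIn (G : SimpleGraph V) (S : Set V) : ℕ :=
  {e ∈ G.edgeSet | ∀ v ∈ e, v ∈ S}.ncard

/-- Sparsity: every subgraph on `n' ≥ 2` vertices has at most
`n₁' + 2 n₂' + min 0 (n₁' - 3)` edges. -/
def Sparse (G : SimpleGraph V) (t1 : V → Prop) : Prop :=
  ∀ S : Set V, 2 ≤ S.ncard →
    (edgesIn G S : ℤ) ≤ (n1 t1 S : ℤ) + 2 * n2 t1 S + min 0 ((n1 t1 S : ℤ) - 3)

/-- Minimal rigidity: either one vertex, or sparse with exactly
`n₁ + 2 n₂ + min 0 (n₁ - 3)` edges. -/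
def MinRigid (G : SimpleGraph V) (t1 : V → Prop) : Prop :=
  Nat.card V = 1 ∨
    (Sparse G t1 ∧
      (G.edgeSet.ncard : ℤ) = (n1 t1 Set.univ : ℤ) + 2 * n2 t1 Set.univ +
        min 0 ((n1 t1 Set.univ : ℤ) - 3))

/-- Rigidity: contains a spanning minimally rigid subgraph. -/
def Rigid (G : SimpleGraph V) (t1 : V → Prop) : Prop :=
  ∃ H : SimpleGraph V, H ≤ G ∧ MinRigid H t1

/-- A rigid block: a vertex-induced rigid subgraph, identified with its vertex set. -/
def RigidBlock (G : SimpleGraph V) (t1 : V → Prop) (S : Set V) : Prop :=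
  Rigid (G.induce S) (fun v => t1 ↑v)

section AuxStmt3

open Function

variable {V : Type*}

lemma sep_subtype' (p : V → Prop) {S : Set V} (T : Set ↥S) :
    Subtype.val '' {v ∈ T | p ↑v} = {v ∈ Subtype.val '' T | p v} := by
  ext v
  simp only [Set.mem_image, Set.mem_setOf_eq, Set.mem_sep_iff]
  constructor
  · rintro ⟨u, ⟨hu, hp⟩, rfl⟩; exact ⟨⟨u, hu, rfl⟩, hp⟩
  · rintro ⟨⟨u, hu, rfl⟩, hp⟩; exact ⟨u, ⟨hu, hp⟩, rfl⟩

lemma n1_subtype' (t1 : V → Prop) {S : Set V} (T : Set ↥S) :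
    n1 (fun v : ↥S => t1 ↑v) T = n1 t1 (Subtype.val '' T) := by
  unfold n1
  rw [← sep_subtype', Set.ncard_image_of_injective _ Subtype.val_injective]

lemma n2_subtype' (t1 : V → Prop) {S : Set V} (T : Set ↥S) :
    n2 (fun v : ↥S => t1 ↑v) T = n2 t1 (Subtype.val '' T) := by
  unfold n2
  rw [← sep_subtype' (fun v => ¬ t1 v), Set.ncard_image_of_injective _ Subtype.val_injective]

lemma edgeSet_map' {W : Type*} (f : V ↪ W) (H : SimpleGraph V) :
    (H.map f).edgeSet = Sym2.map f '' H.edgeSet := by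
  ext e
  induction e using Sym2.ind with
  | _ a b =>
    simp only [SimpleGraph.mem_edgeSet, SimpleGraph.map_adj, Set.mem_image]
    constructor
    · rintro ⟨u, v, huv, rfl, rfl⟩
      exact ⟨s(u, v), huv, rfl⟩
    · rintro ⟨e, he, hmap⟩
      induction e using Sym2.ind with
      | _ u v =>
        rw [Sym2.map_pair_eq, Sym2.eq_iff] at hmap
        rcases hmap with ⟨rfl, rfl⟩ | ⟨rfl, rfl⟩
        · exact ⟨u, v, he, rfl, rfl⟩
        · exact ⟨v, u, he.symm, rfl, rfl⟩

lemma ncard_edgeSet_map {W : Type*} (f : V ↪ W) (H : SimpleGraph V) :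
    ((H.map f).edgeSet).ncard = H.edgeSet.ncard := by
  rw [edgeSet_map', Set.ncard_image_of_injective _ (Sym2.map.injective f.injective)]

lemma comap_map_eq' {S : Set V} (F : SimpleGraph V)
    (hF : ∀ a b, F.Adj a b → a ∈ S ∧ b ∈ S) :
    (F.comap (Subtype.val : ↥S → V)).map (Embedding.subtype (· ∈ S)) = F := by
  ext a b
  simp only [SimpleGraph.map_adj, SimpleGraph.comap_adj, Embedding.coe_subtype]
  constructor
  · rintro ⟨-, u, v, huv, rfl, rfl⟩; exact huv
  · intro hab
    obtain ⟨ha, hb⟩ := hF a b hab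
    exact ⟨F.ne_of_adj hab, ⟨a, ha⟩, ⟨b, hb⟩, hab, rfl, rfl⟩

lemma ncard_edgeSet_comap {S : Set V} (F : SimpleGraph V)
    (hF : ∀ a b, F.Adj a b → a ∈ S ∧ b ∈ S) :
    ((F.comap (Subtype.val : ↥S → V)).edgeSet).ncard = F.edgeSet.ncard := by
  conv_rhs => rw [← comap_map_eq' F hF]
  rw [ncard_edgeSet_map]

lemma edgesIn_subtype_le [Fintype V] {S : Set V} {G : SimpleGraph V}
    (K : SimpleGraph ↥S) (hK : K ≤ G.induce S) (T : Set ↥S) :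
    edgesIn K T ≤ edgesIn G (Subtype.val '' T) := by
  unfold edgesIn
  have himg : Sym2.map (Subtype.val : ↥S → V) '' {e ∈ K.edgeSet | ∀ v ∈ e, v ∈ T}
      ⊆ {e ∈ G.edgeSet | ∀ v ∈ e, v ∈ Subtype.val '' T} := by
    rintro e ⟨e', ⟨he', hmem⟩, rfl⟩
    induction e' using Sym2.ind with
    | _ u v =>
      refine ⟨hK he', ?_⟩
      rw [Sym2.map_pair_eq]
      intro w hw
      rcases Sym2.mem_iff.mp hw with rfl | rfl
      · exact ⟨u, hmem u (Sym2.mem_mk_left u v), rfl⟩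
      · exact ⟨v, hmem v (Sym2.mem_mk_right u v), rfl⟩
  calc {e ∈ K.edgeSet | ∀ v ∈ e, v ∈ T}.ncard
      = (Sym2.map (Subtype.val : ↥S → V) '' {e ∈ K.edgeSet | ∀ v ∈ e, v ∈ T}).ncard := by
        rw [Set.ncard_image_of_injective _ (Sym2.map.injective Subtype.val_injective)]
    _ ≤ _ := Set.ncard_le_ncard himg (Set.toFinite _)

lemma sparse_induce [Fintype V] {G : SimpleGraph V} {t1 : V → Prop}
    (hG : Sparse G t1) {S : Set V} (K : SimpleGraph ↥S) (hK : K ≤ G.induce S) :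
    Sparse K (fun v => t1 ↑v) := by
  intro T hT
  have h2 : 2 ≤ (Subtype.val '' T).ncard := by
    rwa [Set.ncard_image_of_injective _ Subtype.val_injective]
  have hsp := hG _ h2
  have hE := edgesIn_subtype_le K hK T
  rw [n1_subtype', n2_subtype']
  have : (edgesIn K T : ℤ) ≤ (edgesIn G (Subtype.val '' T) : ℤ) := by exact_mod_cast hE
  linarith

lemma n1_add_n2 [Fintype V] (t1 : V → Prop) (S : Set V) :
    n1 t1 S + n2 t1 S = S.ncard := by
  unfold n1 n2
  rw [← Set.ncard_union_eq]
  · congr 1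
    ext v
    by_cases hv : t1 v <;> simp [hv]
  exact Set.disjoint_left.mpr (fun v hv hv' => hv'.2 hv.2)

lemma n1_le_ncard [Fintype V] (t1 : V → Prop) (S : Set V) :
    n1 t1 S ≤ S.ncard :=
  Set.ncard_le_ncard (fun _ hv => hv.1) (Set.toFinite _)

lemma n1_mono [Fintype V] (t1 : V → Prop) {S T : Set V} (h : S ⊆ T) :
    n1 t1 S ≤ n1 t1 T :=
  Set.ncard_le_ncard (fun v hv => ⟨h hv.1, hv.2⟩) (Set.toFinite _)

lemma n1_union_add_inter [Fintype V] (t1 : V → Prop) (A B : Set V) :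
    n1 t1 (A ∪ B) + n1 t1 (A ∩ B) = n1 t1 A + n1 t1 B := by
  unfold n1
  have h1 : {v ∈ A ∪ B | t1 v} = {v ∈ A | t1 v} ∪ {v ∈ B | t1 v} := by
    ext v; by_cases hv : t1 v <;> simp [hv, and_or_right]
  have h2 : {v ∈ A ∩ B | t1 v} = {v ∈ A | t1 v} ∩ {v ∈ B | t1 v} := by
    ext v; by_cases hv : t1 v <;> simp [hv] <;> tauto
  rw [h1, h2, Set.ncard_union_add_ncard_inter]

lemma n2_union_add_inter [Fintype V] (t1 : V → Prop) (A B : Set V) :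
    n2 t1 (A ∪ B) + n2 t1 (A ∩ B) = n2 t1 A + n2 t1 B := by
  unfold n2
  have h1 : {v ∈ A ∪ B | ¬ t1 v} = {v ∈ A | ¬ t1 v} ∪ {v ∈ B | ¬ t1 v} := by
    ext v; by_cases hv : t1 v <;> simp [hv, and_or_right]
  have h2 : {v ∈ A ∩ B | ¬ t1 v} = {v ∈ A | ¬ t1 v} ∩ {v ∈ B | ¬ t1 v} := by
    ext v; by_cases hv : t1 v <;> simp [hv] <;> tauto
  rw [h1, h2, Set.ncard_union_add_ncard_inter]

lemma edgeSet_ncard_le_edgesIn [Fintype V] {G F : SimpleGraph V} {S : Set V}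
    (hle : F ≤ G) (hin : ∀ a b, F.Adj a b → a ∈ S ∧ b ∈ S) :
    F.edgeSet.ncard ≤ edgesIn G S := by
  apply Set.ncard_le_ncard _ (Set.toFinite _)
  intro e he
  induction e using Sym2.ind with
  | _ a b =>
    refine ⟨hle he, ?_⟩
    intro v hv
    rcases Sym2.mem_iff.mp hv with rfl | rfl
    · exact (hin _ _ he).1
    · exact (hin _ _ he).2

/-- Extract a spanning minimally rigid witness from a rigid block with at least
three type-1 vertices, as a subgraph of `G` on vertex set `S`. -/
lemma rigidBlock_extract [Fintype V] {G : SimpleGraph V} {t1 : V → Prop} {S : Set V}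
    (hS : RigidBlock G t1 S) (h3 : 3 ≤ n1 t1 S) :
    ∃ F : SimpleGraph V, F ≤ G ∧ (∀ a b, F.Adj a b → a ∈ S ∧ b ∈ S) ∧
      (F.edgeSet.ncard : ℤ) = (n1 t1 S : ℤ) + 2 * n2 t1 S := by
  obtain ⟨H, hle, hmr⟩ := hS
  rcases hmr with hone | ⟨_, hcount⟩
  · exfalso
    rw [Nat.card_coe_set_eq] at hone
    have := n1_le_ncard t1 S
    omega
  · refine ⟨H.map (Embedding.subtype (· ∈ S)), ?_, ?_, ?_⟩
    · rw [SimpleGraph.map_le_iff_le_comap]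
      exact hle
    · rintro a b ⟨-, u, v, _, rfl, rfl⟩
      exact ⟨u.2, v.2⟩
    · have himg : Subtype.val '' (Set.univ : Set ↥S) = S := by
        rw [Set.image_univ, Subtype.range_coe]
      rw [n1_subtype', n2_subtype', himg] at hcount
      have hmin : min 0 ((n1 t1 S : ℤ) - 3) = 0 := by
        apply min_eq_left; omega
      rw [ncard_edgeSet_map, hcount, hmin, add_zero]

/-- Package a subgraph into a rigid block witness. -/
lemma rigidBlock_of_subgraph [Fintype V] {G : SimpleGraph V} {t1 : V → Prop} {S : Set V}
    (hG : Sparse G t1) (F : SimpleGraph V) (hFle : F ≤ G)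
    (hin : ∀ a b, F.Adj a b → a ∈ S ∧ b ∈ S) (h3 : 3 ≤ n1 t1 S)
    (hcard : (F.edgeSet.ncard : ℤ) = (n1 t1 S : ℤ) + 2 * n2 t1 S) :
    RigidBlock G t1 S := by
  have hKle : F.comap (Subtype.val : ↥S → V) ≤ G.induce S := by
    intro u v huv
    exact hFle huv
  refine ⟨F.comap (Subtype.val : ↥S → V), hKle, Or.inr ⟨sparse_induce hG _ hKle, ?_⟩⟩
  have himg : Subtype.val '' (Set.univ : Set ↥S) = S := by
    rw [Set.image_univ, Subtype.range_coe]
  rw [n1_subtype', n2_subtype', himg, ncard_edgeSet_comap F hin, hcard]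
  have hmin : min 0 ((n1 t1 S : ℤ) - 3) = 0 := by
    apply min_eq_left; omega
  rw [hmin, add_zero]

end AuxStmt3

/-- If two rigid blocks of a sparse graph intersect in at least one vertex and
each contains at least 3 type-1 vertices, then the intersection contains at
least 3 type-1 vertices and the union and intersection are rigid blocks. -/
theorem stmt3 {V : Type*} [Fintype V] (G : SimpleGraph V) (t1 : V → Prop)
    (hG : Sparse G t1) (A B : Set V)
    (hA : RigidBlock G t1 A) (hB : RigidBlock G t1 B)
    (h : 1 ≤ (A ∩ B).ncard) (hA1 : 3 ≤ n1 t1 A) (hB1 : 3 ≤ n1 t1 B) :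
    3 ≤ n1 t1 (A ∩ B) ∧ RigidBlock G t1 (A ∪ B) ∧ RigidBlock G t1 (A ∩ B) := by
  obtain ⟨FA, hFAle, hFAin, hFAcard⟩ := rigidBlock_extract hA hA1
  obtain ⟨FB, hFBle, hFBin, hFBcard⟩ := rigidBlock_extract hB hB1
  set F : SimpleGraph V := FA ⊔ FB with hF
  set Fi : SimpleGraph V := FA ⊓ FB with hFi
  have hFle : F ≤ G := sup_le hFAle hFBle
  have hFile : Fi ≤ G := le_trans inf_le_left hFAle
  have hFin : ∀ a b, F.Adj a b → a ∈ A ∪ B ∧ b ∈ A ∪ B := by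
    rintro a b (hab | hab)
    · exact ⟨Or.inl (hFAin a b hab).1, Or.inl (hFAin a b hab).2⟩
    · exact ⟨Or.inr (hFBin a b hab).1, Or.inr (hFBin a b hab).2⟩
  have hFiin : ∀ a b, Fi.Adj a b → a ∈ A ∩ B ∧ b ∈ A ∩ B := by
    rintro a b ⟨h1, h2⟩
    exact ⟨⟨(hFAin a b h1).1, (hFBin a b h2).1⟩, ⟨(hFAin a b h1).2, (hFBin a b h2).2⟩⟩
  have hIE : F.edgeSet.ncard + Fi.edgeSet.ncard = FA.edgeSet.ncard + FB.edgeSet.ncard := by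
    rw [hF, hFi, SimpleGraph.edgeSet_sup, SimpleGraph.edgeSet_inf]
    exact Set.ncard_union_add_ncard_inter _ _
  -- abbreviations
  have hmod1 := n1_union_add_inter t1 A B
  have hmod2 := n2_union_add_inter t1 A B
  have hu1 : 3 ≤ n1 t1 (A ∪ B) := le_trans hA1 (n1_mono t1 Set.subset_union_left)
  have hUcard : 2 ≤ (A ∪ B).ncard := by
    have h1 := n1_le_ncard t1 (A ∪ B); omega
  -- upper bound on edges of F
  have hEFle : (F.edgeSet.ncard : ℤ) ≤ (n1 t1 (A ∪ B) : ℤ) + 2 * n2 t1 (A ∪ B) := by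
    have h1 : (F.edgeSet.ncard : ℤ) ≤ (edgesIn G (A ∪ B) : ℤ) := by
      exact_mod_cast edgeSet_ncard_le_edgesIn hFle hFin
    have h2 := hG (A ∪ B) hUcard
    have h3 : min 0 ((n1 t1 (A ∪ B) : ℤ) - 3) = 0 := by
      apply min_eq_left; omega
    omega
  -- lower bound on common edges
  have hlow : (n1 t1 (A ∩ B) : ℤ) + 2 * n2 t1 (A ∩ B) ≤ (Fi.edgeSet.ncard : ℤ) := by
    have := hIE
    push_cast at *
    omega
  -- common edges sit inside A ∩ B
  have hEFiIn : (Fi.edgeSet.ncard : ℤ) ≤ (edgesIn G (A ∩ B) : ℤ) := by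
    exact_mod_cast edgeSet_ncard_le_edgesIn hFile hFiin
  have hsum := n1_add_n2 t1 (A ∩ B)
  -- rule out a one-point intersection
  have hIcard : 2 ≤ (A ∩ B).ncard := by
    by_contra hc
    have h1 : (A ∩ B).ncard = 1 := by omega
    have h0 : edgesIn G (A ∩ B) = 0 := by
      unfold edgesIn
      rw [Set.ncard_eq_zero (Set.toFinite _)]
      ext e
      simp only [Set.mem_sep_iff, Set.mem_empty_iff_false, iff_false, not_and]
      intro he hmem
      induction e using Sym2.ind with
      | _ a b =>
        have hab : a ≠ b := G.ne_of_adj he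
        have : 1 < (A ∩ B).ncard := by
          rw [Set.one_lt_ncard (Set.toFinite _)]
          exact ⟨a, hmem a (Sym2.mem_mk_left a b), b, hmem b (Sym2.mem_mk_right a b), hab⟩
        omega
    rw [h0] at hEFiIn
    omega
  -- sparsity on the intersection
  have hup := hG (A ∩ B) hIcard
  have hminle : min 0 ((n1 t1 (A ∩ B) : ℤ) - 3) ≤ (n1 t1 (A ∩ B) : ℤ) - 3 := min_le_right _ _
  have hminle0 : min 0 ((n1 t1 (A ∩ B) : ℤ) - 3) ≤ 0 := min_le_left _ _
  have hi1 : 3 ≤ n1 t1 (A ∩ B) := by omega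
  refine ⟨hi1, ?_, ?_⟩
  · -- union is a rigid block
    apply rigidBlock_of_subgraph hG F hFle hFin hu1
    push_cast at *
    omega
  · -- intersection is a rigid block
    apply rigidBlock_of_subgraph hG Fi hFile hFiin hi1
    push_cast at *
    omega
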